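/- Let C and D be categories with all morphisms monic, suppose C has a universal ind-object, and let Φ : C → D be a functor. The following are equivalent: (i) Φ satisfies the embedding property (every object Y of D embeds into Φ(Z) for some object Z of C); (ii) Φ maps some universal ind-object of C to a universal ind-object of D; (iii) Φ maps every universal ind-object of C to a universal ind-object of D. -/
import Mathlib


open CategoryTheory

universe u v

/-- An ind-object of a category `C`: a sequential diagram `X₁ → X₂ → ⋯` in `C`. -/
structure IndObject (C : Type u) [Category.{v} C] where
  obj : ℕ → C
  map : ∀ n : ℕ, obj n ⟶ obj (n + 1)

namespace IndObject

variable {C : Type u} [Category.{v} C]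

/-- The transition morphism `obj n ⟶ obj m` of an ind-object, for `n ≤ m`. -/
def trans (Ω : IndObject C) : ∀ {n m : ℕ}, n ≤ m → (Ω.obj n ⟶ Ω.obj m) :=
  fun {n m} h =>
    Nat.leRecOn (C := fun m => Ω.obj n ⟶ Ω.obj m) h (fun {l} g => g ≫ Ω.map l) (𝟙 _)

/-- An ind-object is universal if every object of `C` embeds into it. -/
def Universal (Ω : IndObject C) : Prop :=
  ∀ X : C, ∃ n : ℕ, Nonempty (X ⟶ Ω.obj n)

/-- An ind-object is f-injective if every embedding of an object of `C` into it extends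
along any morphism of `C`. -/
def FInjective (Ω : IndObject C) : Prop :=
  ∀ ⦃X Y : C⦄ (α : X ⟶ Y) (n : ℕ) (γ : X ⟶ Ω.obj n),
    ∃ (m : ℕ) (h : n ≤ m) (β : Y ⟶ Ω.obj m), α ≫ β = γ ≫ Ω.trans h

end IndObject


universe u' v'

/-- The termwise application of a functor to an ind-object. -/
def mapInd {C : Type u} [Category.{v} C] {D : Type u'} [Category.{v'} D]
    (Φ : C ⥤ D) (Ω : IndObject C) : IndObject D where
  obj n := Φ.obj (Ω.obj n)
  map n := Φ.map (Ω.map n)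

/-- for a functor `Φ : C → D` between categories with all morphisms monic,
with `C` having a universal ind-object, the following are equivalent: (i) `Φ` has the
embedding property; (ii) `Φ` maps some universal ind-object to a universal ind-object;
(iii) `Φ` maps every universal ind-object to a universal ind-object. -/
theorem stmt_15 (C : Type u) [Category.{v} C] (D : Type u') [Category.{v'} D]
    (hmonoC : ∀ {X Y : C} (f : X ⟶ Y), Mono f)
    (hmonoD : ∀ {X Y : D} (f : X ⟶ Y), Mono f)
    (Φ : C ⥤ D) (hU : ∃ Ω : IndObject C, Ω.Universal) :
    ((∀ Y : D, ∃ Z : C, Nonempty (Y ⟶ Φ.obj Z)) ↔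
        (∃ Ω : IndObject C, Ω.Universal ∧ (mapInd Φ Ω).Universal)) ∧
    ((∀ Y : D, ∃ Z : C, Nonempty (Y ⟶ Φ.obj Z)) ↔
        (∀ Ω : IndObject C, Ω.Universal → (mapInd Φ Ω).Universal)) := by
  have emb_to_all : (∀ Y : D, ∃ Z : C, Nonempty (Y ⟶ Φ.obj Z)) →
      ∀ Ω : IndObject C, Ω.Universal → (mapInd Φ Ω).Universal := by
    intro h Ω hΩ Y
    obtain ⟨Z, ⟨f⟩⟩ := h Y
    obtain ⟨n, ⟨g⟩⟩ := hΩ Z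
    exact ⟨n, ⟨f ≫ Φ.map g⟩⟩
  have some_to_emb : (∃ Ω : IndObject C, Ω.Universal ∧ (mapInd Φ Ω).Universal) →
      ∀ Y : D, ∃ Z : C, Nonempty (Y ⟶ Φ.obj Z) := by
    rintro ⟨Ω, _, hΩD⟩ Y
    obtain ⟨n, ⟨f⟩⟩ := hΩD Y
    exact ⟨Ω.obj n, ⟨f⟩⟩
  obtain ⟨Ω₀, hΩ₀⟩ := hU
  constructor
  · exact ⟨fun h => ⟨Ω₀, hΩ₀, emb_to_all h Ω₀ hΩ₀⟩, some_to_emb⟩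
  · exact ⟨emb_to_all, fun h => some_to_emb ⟨Ω₀, hΩ₀, h Ω₀ hΩ₀⟩⟩
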